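/- Assume a(ι) = b(ι) = 1 and let S : H → H be the antipode of H_{(ι,a,b)}, i.e. the linear map satisfying m∘(S⊗id)∘Δ = η∘ε = m∘(id⊗S)∘Δ, where m is the multiplication and η : ℂ → H the unit. Then: (i) if τ ∈ V satisfies a(τ) = b(τ) = 0, then S(τ^{⊗(n−1)}) = −τ^{⊗(n−1)} for all n ≥ 1; (ii) if τ ∈ V satisfies a(τ) = 1 and b(τ) = 0, then S(τ^{⊗(n−1)}) = −(τ−ι)^{⊗(n−1)} for all n ≥ 1 (in both cases τ^{⊗0} and (τ−ι)^{⊗0} denote 1₁ ∈ H_1). -/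

import Mathlib

open scoped TensorProduct

noncomputable section

namespace PaperCHA

/-- Type synonym for the tensor algebra of `V`, to be equipped with the (non-unital)
`ι`-insertion multiplication `u ∘ v = u ⊗ ι ⊗ v`. -/
def IotaCore (V : Type) [AddCommGroup V] [Module ℂ V] (_iv : V) : Type := TensorAlgebra ℂ V

section Core

variable {V : Type} [AddCommGroup V] [Module ℂ V] {iv : V}

instance : AddCommGroup (IotaCore V iv) := inferInstanceAs (AddCommGroup (TensorAlgebra ℂ V))
instance : Module ℂ (IotaCore V iv) := inferInstanceAs (Module ℂ (TensorAlgebra ℂ V))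

/-- The identity map, regarding an element of the tensor algebra as an element of
`IotaCore V iv`. -/
def IotaCore.ofT (iv : V) : TensorAlgebra ℂ V → IotaCore V iv := id

/-- The identity map, regarding an element of `IotaCore V iv` as an element of the
tensor algebra. -/
def IotaCore.toT : IotaCore V iv → TensorAlgebra ℂ V := id

instance : NonUnitalRing (IotaCore V iv) :=
  { (inferInstanceAs (AddCommGroup (IotaCore V iv)) : AddCommGroup (IotaCore V iv)) with
    mul := fun u v => IotaCore.ofT iv (IotaCore.toT u * TensorAlgebra.ι ℂ iv * IotaCore.toT v)
    left_distrib := fun u v w => by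
      show IotaCore.toT u * TensorAlgebra.ι ℂ iv * (IotaCore.toT v + IotaCore.toT w)
          = IotaCore.toT u * TensorAlgebra.ι ℂ iv * IotaCore.toT v
            + IotaCore.toT u * TensorAlgebra.ι ℂ iv * IotaCore.toT w
      rw [mul_add]
    right_distrib := fun u v w => by
      show (IotaCore.toT u + IotaCore.toT v) * TensorAlgebra.ι ℂ iv * IotaCore.toT w
          = IotaCore.toT u * TensorAlgebra.ι ℂ iv * IotaCore.toT w
            + IotaCore.toT v * TensorAlgebra.ι ℂ iv * IotaCore.toT w
      rw [add_mul, add_mul]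
    zero_mul := fun u => by
      show (0 : TensorAlgebra ℂ V) * TensorAlgebra.ι ℂ iv * IotaCore.toT u = 0
      rw [zero_mul, zero_mul]
    mul_zero := fun u => by
      show IotaCore.toT u * TensorAlgebra.ι ℂ iv * (0 : TensorAlgebra ℂ V) = 0
      rw [mul_zero]
    mul_assoc := fun u v w => by
      show IotaCore.toT u * TensorAlgebra.ι ℂ iv * IotaCore.toT v * TensorAlgebra.ι ℂ iv
            * IotaCore.toT w
          = IotaCore.toT u * TensorAlgebra.ι ℂ iv
            * (IotaCore.toT v * TensorAlgebra.ι ℂ iv * IotaCore.toT w)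
      simp only [mul_assoc] }

instance : SMulCommClass ℂ (IotaCore V iv) (IotaCore V iv) :=
  ⟨fun c u v => by
    show c • (IotaCore.toT u * TensorAlgebra.ι ℂ iv * IotaCore.toT v)
        = IotaCore.toT u * TensorAlgebra.ι ℂ iv * (c • IotaCore.toT v)
    rw [mul_smul_comm]⟩

instance : IsScalarTower ℂ (IotaCore V iv) (IotaCore V iv) :=
  ⟨fun c u v => by
    show (c • IotaCore.toT u) * TensorAlgebra.ι ℂ iv * IotaCore.toT v
        = c • (IotaCore.toT u * TensorAlgebra.ι ℂ iv * IotaCore.toT v)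
    rw [smul_mul_assoc, smul_mul_assoc]⟩

end Core

/-- The Hopf algebra `H_{(ι,a,b)}` of the paper, as a graded algebra: the unitalization
of the tensor algebra of `V` equipped with the `ι`-insertion product.  Its `n`-th graded
component (`n ≥ 1`) is `V^{⊗(n-1)}`, and the `0`-th is `ℂ·1`. -/
abbrev HAlg (V : Type) [AddCommGroup V] [Module ℂ V] (iv : V) : Type :=
  Unitization ℂ (IotaCore V iv)

section HAlg

variable {V : Type} [AddCommGroup V] [Module ℂ V]

/-- The pure tensor `x₁ ⊗ ⋯ ⊗ x_{n-1} ∈ H_n` associated to a list `[x₁, …, x_{n-1}]`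
(the empty list gives `1₁ ∈ H_1`). -/
def pt (iv : V) (l : List V) : HAlg V iv :=
  Unitization.inr (IotaCore.ofT iv ((l.map (TensorAlgebra.ι ℂ)).prod))

/-- The grading of `H`: `grade iv 0 = ℂ·1` and `grade iv (n+1)` is the span of the
pure tensors of `n` vectors, i.e. `V^{⊗ n}`. -/
def grade (iv : V) : ℕ → Submodule ℂ (HAlg V iv)
  | 0 => Submodule.span ℂ {1}
  | (n + 1) => Submodule.span ℂ {x | ∃ l : List V, l.length = n ∧ x = pt iv l}

/-- The linear projection `ε : H → ℂ` onto the degree-zero component `H_0 = ℂ·1`. -/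
def eps (iv : V) : HAlg V iv →ₗ[ℂ] ℂ :=
  (Unitization.fstHom ℂ (IotaCore V iv)).toLinearMap

/-- Auxiliary function computing `T_φ(S; ψ)` on the sorted list `s₁ < ⋯ < s_k` of a
nonempty subset `S ⊆ {1, …, n}`: returns the scalar `c` (together with all scalar factors
`φ(ψ_{s_i})` coming from non-consecutive entries) and the list `[v₁, …, v_{k-1}]`. -/
def Tlist (iv : V) (φ : V →ₗ[ℂ] ℂ) (ψ : ℕ → V) (n : ℕ) : List ℕ → ℂ × List V
  | [] => (1, [])
  | [s] => (if s = n then 1 else φ (ψ s), [])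
  | s :: t :: rest =>
    let p := Tlist iv φ ψ n (t :: rest)
    if t = s + 1 then (p.1, ψ s :: p.2) else (φ (ψ s) * p.1, iv :: p.2)

/-- The element `T_φ(S; ψ) ∈ H` for a subset `S ⊆ {1, …, n}` (one gets `1 ∈ H_0` for
`S = ∅`, and `c • (v₁ ⊗ ⋯ ⊗ v_{k-1}) ∈ H_k` for `S = {s₁ < ⋯ < s_k}`). -/
def Tfun (iv : V) (φ : V →ₗ[ℂ] ℂ) (ψ : ℕ → V) (n : ℕ) (S : Finset ℕ) : HAlg V iv :=
  if S = ∅ then 1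
  else (Tlist iv φ ψ n (S.sort (· ≤ ·))).1 • pt iv (Tlist iv φ ψ n (S.sort (· ≤ ·))).2

/-- The indexing `ψ : {1, …, n} → V` (1-based) associated to a list `[ψ₁, …, ψ_{n-1}]`. -/
def psiOf (l : List V) : ℕ → V := fun j => l.getD (j - 1) 0

/-- The defining property of the coproduct `Δ` of `H_{(ι,a,b)}`: `Δ(1) = 1 ⊗ 1` and, on
a pure tensor `ψ = ψ₁ ⊗ ⋯ ⊗ ψ_{n-1} ∈ H_n`,
`Δ(ψ) = ∑_{A ⊆ {1,…,n}} T_a(A; ψ) ⊗ T_b(Aᶜ; ψ)`. -/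
def DeltaSpec (iv : V) (a b : V →ₗ[ℂ] ℂ)
    (Δ : HAlg V iv →ₗ[ℂ] HAlg V iv ⊗[ℂ] HAlg V iv) : Prop :=
  Δ 1 = 1 ⊗ₜ[ℂ] 1 ∧
  ∀ l : List V,
    Δ (pt iv l) =
      ∑ A ∈ (Finset.Icc 1 (l.length + 1)).powerset,
        Tfun iv a (psiOf l) (l.length + 1) A ⊗ₜ[ℂ]
          Tfun iv b (psiOf l) (l.length + 1) (Finset.Icc 1 (l.length + 1) \ A)

end HAlg

end PaperCHA

namespace PaperCHA
section Aux
variable {V : Type} [AddCommGroup V] [Module ℂ V]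

lemma pt_mul (iv : V) (l₁ l₂ : List V) :
    pt iv l₁ * pt iv l₂ = pt iv (l₁ ++ iv :: l₂) := by
  rw [pt, pt, pt, ← Unitization.inr_mul]
  congr 1
  show (l₁.map (TensorAlgebra.ι ℂ)).prod * TensorAlgebra.ι ℂ iv
      * (l₂.map (TensorAlgebra.ι ℂ)).prod = _
  simp only [List.map_append, List.map_cons, List.prod_append, List.prod_cons, mul_assoc]
  rfl

lemma eps_pt (iv : V) (l : List V) : eps iv (pt iv l) = 0 := by
  simp [eps, pt]

lemma sort_Icc (s t : ℕ) :
    Finset.sort (Finset.Icc s t) (· ≤ ·) = List.range' s (t + 1 - s) := by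
  refine (fun h1 h2 h3 => List.Perm.eq_of_pairwise' (r := (· ≤ ·)) h2 h3 h1) ?_ ?_ ?_
  · apply List.perm_of_nodup_nodup_toFinset_eq (Finset.sort_nodup _ _)
      (List.nodup_range' 1 (by decide))
    rw [Finset.sort_toFinset]
    ext x
    simp only [Finset.mem_coe, List.mem_toFinset, List.mem_range'_1, Finset.mem_Icc]
    omega
  · exact Finset.pairwise_sort _ _
  · exact (List.pairwise_lt_range' 1 (by decide)).imp le_of_lt

lemma toFinset_range' (s k : ℕ) (hk : 1 ≤ k) :
    (List.range' s k).toFinset = Finset.Icc s (s + k - 1) := by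
  ext x
  simp only [List.mem_toFinset, List.mem_range'_1, Finset.mem_Icc]
  omega

end Aux
end PaperCHA

namespace PaperCHA
section Aux2
variable {V : Type} [AddCommGroup V] [Module ℂ V]

lemma tlist_range' (iv τ : V) (φ : V →ₗ[ℂ] ℂ) (ψ : ℕ → V) (n : ℕ)
    (hψ : ∀ j, 1 ≤ j → j < n → ψ j = τ) :
    ∀ k s, 1 ≤ s → s + k ≤ n →
      Tlist iv φ ψ n (List.range' s (k + 1))
        = (if s + k = n then 1 else φ τ, List.replicate k τ) := by
  intro k
  induction k with
  | zero =>
    intro s hs hn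
    simp only [List.range'_succ, List.range'_zero]
    rw [Tlist]
    by_cases h : s = n
    · simp [h]
    · have hlt : s < n := by omega
      rw [hψ s hs hlt]
      simp [h]
  | succ k ih =>
    intro s hs hn
    have ih' := ih (s + 1) (by omega) (by omega)
    rw [List.range'_succ] at ih'
    rw [List.range'_succ, List.range'_succ, Tlist]
    simp only [if_pos rfl, ih', hψ s hs (by omega)]
    have h1 : s + 1 + k = s + (k + 1) := by omega
    rw [h1, List.replicate_succ]
    simp

lemma tlist_fst_eq_zero (iv τ : V) (φ : V →ₗ[ℂ] ℂ) (hφ : φ τ = 0) (ψ : ℕ → V) (n : ℕ)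
    (hψ : ∀ j, 1 ≤ j → j < n → ψ j = τ) :
    ∀ L : List ℕ, L.Pairwise (· < ·) → (∀ x ∈ L, 1 ≤ x ∧ x ≤ n) → L ≠ [] →
      (Tlist iv φ ψ n L).1 = 0 ∨ ∃ k, L = List.range' (n - k) (k + 1) ∧ k + 1 ≤ n := by
  intro L
  induction L with
  | nil => intro _ _ h; exact absurd rfl h
  | cons s rest ih =>
    intro hsort hmem _
    match rest with
    | [] =>
      obtain ⟨h1, h2⟩ := hmem s (by simp)
      by_cases h : s = n
      · right
        refine ⟨0, ?_, by omega⟩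
        simp [List.range'_one, h]
      · left
        rw [Tlist]
        simp only [if_neg h]
        rw [hψ s h1 (by omega), hφ]
    | t :: rest' =>
      have hst : s < t := (List.pairwise_cons.mp hsort).1 t (by simp)
      obtain ⟨hs1, hs2⟩ := hmem s (by simp)
      obtain ⟨ht1, ht2⟩ := hmem t (by simp)
      by_cases h : t = s + 1
      · rcases ih (List.pairwise_cons.mp hsort).2
            (fun x hx => hmem x (by simp [hx])) (by simp) with h0 | ⟨k, hk, hkn⟩
        · left
          rw [Tlist]
          simp only [if_pos h]
          exact h0
        · right
          have hhead : t = n - k := by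
            have := congrArg (fun l => l.head?) hk
            rw [List.range'_succ] at this
            simpa using this
          refine ⟨k + 1, ?_, by omega⟩
          rw [List.range'_succ]
          have h2 : n - (k + 1) = s := by omega
          rw [h2, ← h, hhead, ← hk, ← hhead]
      · left
        rw [Tlist]
        simp only [if_neg h]
        rw [hψ s hs1 (by omega), hφ, zero_mul]

end Aux2
end PaperCHA

namespace PaperCHA
section Aux3
variable {V : Type} [AddCommGroup V] [Module ℂ V]

lemma psiOf_replicate (τ : V) (m : ℕ) :
    ∀ j, 1 ≤ j → j < m + 1 → psiOf (List.replicate m τ) j = τ := by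
  intro j h1 h2
  have : j - 1 < m := by omega
  simp [psiOf, List.getD_eq_getElem?_getD, List.getElem?_replicate, this]

lemma Tfun_empty (iv : V) (φ : V →ₗ[ℂ] ℂ) (ψ : ℕ → V) (n : ℕ) :
    Tfun iv φ ψ n ∅ = 1 := by simp [Tfun]

lemma Tfun_Icc (iv τ : V) (φ : V →ₗ[ℂ] ℂ) (ψ : ℕ → V) (n : ℕ)
    (hψ : ∀ j, 1 ≤ j → j < n → ψ j = τ) (j k : ℕ)
    (hj : 1 ≤ j) (hjk : j ≤ k) (hkn : k ≤ n) :
    Tfun iv φ ψ n (Finset.Icc j k)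
      = (if k = n then 1 else φ τ) • pt iv (List.replicate (k - j) τ) := by
  have hne : Finset.Icc j k ≠ ∅ := by
    rw [← Finset.nonempty_iff_ne_empty]
    exact Finset.nonempty_Icc.mpr hjk
  rw [Tfun, if_neg hne, sort_Icc]
  have h1 : k + 1 - j = (k - j) + 1 := by omega
  rw [h1, tlist_range' iv τ φ ψ n hψ (k - j) j hj (by omega)]
  have h2 : j + (k - j) = k := by omega
  rw [h2]

lemma Tfun_eq_zero_or (iv τ : V) (φ : V →ₗ[ℂ] ℂ) (hφ : φ τ = 0) (ψ : ℕ → V) (n : ℕ)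
    (hψ : ∀ j, 1 ≤ j → j < n → ψ j = τ) (A : Finset ℕ)
    (hA : A ⊆ Finset.Icc 1 n) (hne : A ≠ ∅) :
    Tfun iv φ ψ n A = 0 ∨ ∃ j, 1 ≤ j ∧ j ≤ n ∧ A = Finset.Icc j n := by
  set L := A.sort (· ≤ ·) with hL
  have hLne : L ≠ [] := by
    intro h
    apply hne
    rw [← Finset.sort_toFinset A (· ≤ ·), ← hL, h, List.toFinset_nil]
  have hmem : ∀ x ∈ L, 1 ≤ x ∧ x ≤ n := by
    intro x hx
    have := hA (by rwa [← Finset.mem_sort (· ≤ ·)])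
    simpa using this
  rcases tlist_fst_eq_zero iv τ φ hφ ψ n hψ L (Finset.sortedLT_sort A).pairwise hmem hLne with
    h0 | ⟨k, hk, hkn⟩
  · left
    rw [Tfun, if_neg hne, ← hL, h0, zero_smul]
  · right
    refine ⟨n - k, by omega, by omega, ?_⟩
    rw [← Finset.sort_toFinset A (· ≤ ·), ← hL, hk, toFinset_range' _ _ (by omega)]
    congr 1
    omega

end Aux3
end PaperCHA

namespace PaperCHA
section Aux4
variable {V : Type} [AddCommGroup V] [Module ℂ V]

lemma inrT_sub (iv : V) (x y : TensorAlgebra ℂ V) :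
    (Unitization.inr (IotaCore.ofT iv (x - y)) : HAlg V iv)
      = Unitization.inr (IotaCore.ofT iv x) - Unitization.inr (IotaCore.ofT iv y) := by
  rw [sub_eq_add_neg]
  rw [show IotaCore.ofT iv (x + -y) = IotaCore.ofT iv x + IotaCore.ofT iv (-y) from rfl]
  rw [Unitization.inr_add, sub_eq_add_neg]
  congr 1
  exact Unitization.inr_neg ℂ (IotaCore.ofT iv y)

/-- Prepend `v ⊗ ·` to the non-scalar part, as an additive map. -/
def prep (iv v : V) : HAlg V iv →+ HAlg V iv where
  toFun x := Unitization.inr (IotaCore.ofT iv (TensorAlgebra.ι ℂ v * IotaCore.toT x.snd))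
  map_zero' := by
    show (Unitization.inr (IotaCore.ofT iv (TensorAlgebra.ι ℂ v
      * IotaCore.toT (0 : HAlg V iv).snd)) : HAlg V iv) = 0
    rw [show IotaCore.toT (0 : HAlg V iv).snd = (0 : TensorAlgebra ℂ V) from rfl,
      mul_zero]
    exact Unitization.inr_zero ℂ
  map_add' x y := by
    show (Unitization.inr (IotaCore.ofT iv (TensorAlgebra.ι ℂ v
        * IotaCore.toT (x + y).snd)) : HAlg V iv)
      = Unitization.inr (IotaCore.ofT iv (TensorAlgebra.ι ℂ v * IotaCore.toT x.snd))
        + Unitization.inr (IotaCore.ofT iv (TensorAlgebra.ι ℂ v * IotaCore.toT y.snd))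
    rw [show IotaCore.toT (x + y).snd =
        IotaCore.toT x.snd + IotaCore.toT y.snd from rfl, mul_add]
    exact Unitization.inr_add ℂ _ _

lemma prep_pt (iv v : V) (l : List V) : prep iv v (pt iv l) = pt iv (v :: l) := rfl

lemma pt_cons_sub (iv v w : V) (l : List V) :
    pt iv ((v - w) :: l) = pt iv (v :: l) - pt iv (w :: l) := by
  rw [show pt iv ((v - w) :: l) = Unitization.inr (IotaCore.ofT iv
      ((TensorAlgebra.ι ℂ v - TensorAlgebra.ι ℂ w)
        * (l.map (TensorAlgebra.ι ℂ)).prod)) by rw [pt]; simp [map_sub],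
    sub_mul, inrT_sub]
  rfl

lemma telescope (iv τ : V) : ∀ m : ℕ,
    pt iv (List.replicate m (τ - iv))
      = pt iv (List.replicate m τ)
        - ∑ i ∈ Finset.range m,
            pt iv (List.replicate i (τ - iv)) * pt iv (List.replicate (m - 1 - i) τ) := by
  intro m
  induction m with
  | zero => simp
  | succ m ih =>
    have hy : ∀ q i : ℕ,
        pt iv (List.replicate (i + 1) (τ - iv)) * pt iv (List.replicate q τ)
          = prep iv (τ - iv)
              (pt iv (List.replicate i (τ - iv)) * pt iv (List.replicate q τ)) := by
      intro q i
      rw [pt_mul, pt_mul, prep_pt, List.replicate_succ, List.cons_append]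
    rw [Finset.sum_range_succ']
    have h1 : ∑ i ∈ Finset.range m,
        pt iv (List.replicate (i + 1) (τ - iv))
          * pt iv (List.replicate (m + 1 - 1 - (i + 1)) τ)
        = prep iv (τ - iv) (∑ i ∈ Finset.range m,
            pt iv (List.replicate i (τ - iv)) * pt iv (List.replicate (m - 1 - i) τ)) := by
      rw [map_sum]
      refine Finset.sum_congr rfl fun i hi => ?_
      have hq : m + 1 - 1 - (i + 1) = m - 1 - i := by omega
      rw [hq, hy]
    rw [h1]
    have h2 : ∑ i ∈ Finset.range m,
        pt iv (List.replicate i (τ - iv)) * pt iv (List.replicate (m - 1 - i) τ)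
        = pt iv (List.replicate m τ) - pt iv (List.replicate m (τ - iv)) := by
      rw [ih]; abel
    rw [h2, map_sub]
    have h3 : prep iv (τ - iv) (pt iv (List.replicate m τ))
        = pt iv (List.replicate (m + 1) τ) - pt iv (iv :: List.replicate m τ) := by
      rw [prep_pt, List.replicate_succ, ← pt_cons_sub]
    have h4 : prep iv (τ - iv) (pt iv (List.replicate m (τ - iv)))
        = pt iv (List.replicate (m + 1) (τ - iv)) := by
      rw [prep_pt, List.replicate_succ]
    have h5 : pt iv (List.replicate 0 (τ - iv)) * pt iv (List.replicate (m + 1 - 1 - 0) τ)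
        = pt iv (iv :: List.replicate m τ) := by
      rw [show List.replicate 0 (τ - iv) = ([] : List V) from rfl, pt_mul]
      norm_num
    rw [h3, h4, h5]
    abel

end Aux4
end PaperCHA

namespace PaperCHA
section Aux5
variable {V : Type} [AddCommGroup V] [Module ℂ V]

lemma Delta_reduced (iv τ : V) (a b : V →ₗ[ℂ] ℂ) (hb : b τ = 0)
    (Δ : HAlg V iv →ₗ[ℂ] HAlg V iv ⊗[ℂ] HAlg V iv) (hΔ : DeltaSpec iv a b Δ) (m : ℕ) :
    Δ (pt iv (List.replicate m τ)) =
      ∑ k ∈ Finset.range (m + 2),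
        Tfun iv a (psiOf (List.replicate m τ)) (m + 1) (Finset.Icc 1 k) ⊗ₜ[ℂ]
          Tfun iv b (psiOf (List.replicate m τ)) (m + 1) (Finset.Icc (k + 1) (m + 1)) := by
  have hψ := psiOf_replicate τ m
  rw [hΔ.2]
  simp only [List.length_replicate]
  have hsub : (Finset.range (m + 2)).image (fun k => Finset.Icc 1 k)
      ⊆ (Finset.Icc 1 (m + 1)).powerset := by
    intro A hA
    rcases Finset.mem_image.mp hA with ⟨k, hk, rfl⟩
    exact Finset.mem_powerset.mpr (Finset.Icc_subset_Icc_right (by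
      have := Finset.mem_range.mp hk; omega))
  have hmain : ∀ A ∈ (Finset.Icc 1 (m + 1)).powerset,
      A ∉ (Finset.range (m + 2)).image (fun k => Finset.Icc 1 k) →
      (Tfun iv a (psiOf (List.replicate m τ)) (m + 1) A ⊗ₜ[ℂ]
        Tfun iv b (psiOf (List.replicate m τ)) (m + 1) (Finset.Icc 1 (m + 1) \ A)
        : HAlg V iv ⊗[ℂ] HAlg V iv) = 0 := by
    intro A hA hAim
    rw [Finset.mem_powerset] at hA
    by_cases hc : Finset.Icc 1 (m + 1) \ A = ∅
    · exfalso
      apply hAim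
      have hAeq : A = Finset.Icc 1 (m + 1) := by
        apply Finset.Subset.antisymm hA
        intro x hx
        by_contra hxA
        have : x ∈ Finset.Icc 1 (m + 1) \ A := Finset.mem_sdiff.mpr ⟨hx, hxA⟩
        simp [hc] at this
      exact Finset.mem_image.mpr ⟨m + 1, by simp, hAeq.symm⟩
    · rcases Tfun_eq_zero_or iv τ b hb (psiOf (List.replicate m τ)) (m + 1) hψ _
          Finset.sdiff_subset hc with h0 | ⟨j, hj1, hj2, hj3⟩
      · rw [h0, TensorProduct.tmul_zero]
      · exfalso
        apply hAim
        have hA' : A = Finset.Icc 1 (j - 1) := by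
          have h4 := congrArg (fun s => Finset.Icc 1 (m + 1) \ s) hj3
          rw [Finset.sdiff_sdiff_eq_self hA] at h4
          rw [h4]
          ext x
          simp only [Finset.mem_sdiff, Finset.mem_Icc]
          omega
        exact Finset.mem_image.mpr ⟨j - 1, Finset.mem_range.mpr (by omega), hA'.symm⟩
  rw [← Finset.sum_subset hsub hmain]
  rw [Finset.sum_image (fun x hx y hy hxy => by
    have hcx := congrArg Finset.card hxy
    simp only [Nat.card_Icc] at hcx
    omega)]
  refine Finset.sum_congr rfl fun k hk => ?_
  congr 1
  congr 1
  ext x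
  simp only [Finset.mem_sdiff, Finset.mem_Icc]
  omega

lemma S_one (iv : V) (a b : V →ₗ[ℂ] ℂ)
    (Δ : HAlg V iv →ₗ[ℂ] HAlg V iv ⊗[ℂ] HAlg V iv) (hΔ : DeltaSpec iv a b Δ)
    (S : HAlg V iv →ₗ[ℂ] HAlg V iv)
    (hS : ∀ x : HAlg V iv,
      LinearMap.mul' ℂ (HAlg V iv) (TensorProduct.map S LinearMap.id (Δ x))
        = algebraMap ℂ (HAlg V iv) (eps iv x)) : S 1 = 1 := by
  have h := hS 1
  rw [hΔ.1] at h
  simpa [eps, TensorProduct.map_tmul, LinearMap.mul'_apply] using h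

lemma key_eq (iv τ : V) (a b : V →ₗ[ℂ] ℂ) (hb : b τ = 0)
    (Δ : HAlg V iv →ₗ[ℂ] HAlg V iv ⊗[ℂ] HAlg V iv) (hΔ : DeltaSpec iv a b Δ)
    (S : HAlg V iv →ₗ[ℂ] HAlg V iv)
    (hS : ∀ x : HAlg V iv,
      LinearMap.mul' ℂ (HAlg V iv) (TensorProduct.map S LinearMap.id (Δ x))
        = algebraMap ℂ (HAlg V iv) (eps iv x)) (m : ℕ) :
    S (pt iv (List.replicate m τ)) =
      - pt iv (List.replicate m τ)
      - a τ • ∑ i ∈ Finset.range m,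
          S (pt iv (List.replicate i τ)) * pt iv (List.replicate (m - 1 - i) τ) := by
  have hψ := psiOf_replicate τ m
  have h := hS (pt iv (List.replicate m τ))
  rw [Delta_reduced iv τ a b hb Δ hΔ m, eps_pt, map_zero, map_sum, map_sum] at h
  simp only [TensorProduct.map_tmul, LinearMap.id_coe, id_eq, LinearMap.mul'_apply] at h
  rw [Finset.sum_range_succ, Finset.sum_range_succ'] at h
  have e0 : Tfun iv a (psiOf (List.replicate m τ)) (m + 1) (Finset.Icc 1 0) = 1 := by
    rw [show Finset.Icc 1 0 = (∅ : Finset ℕ) by simp, Tfun_empty]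
  have e0b : Tfun iv b (psiOf (List.replicate m τ)) (m + 1) (Finset.Icc (0 + 1) (m + 1))
      = pt iv (List.replicate m τ) := by
    rw [show (0:ℕ) + 1 = 1 by norm_num,
      Tfun_Icc iv τ b _ _ hψ 1 (m + 1) le_rfl (by omega) le_rfl, if_pos rfl, one_smul]
    norm_num
  have etopa : Tfun iv a (psiOf (List.replicate m τ)) (m + 1) (Finset.Icc 1 (m + 1))
      = pt iv (List.replicate m τ) := by
    rw [Tfun_Icc iv τ a _ _ hψ 1 (m + 1) le_rfl (by omega) le_rfl, if_pos rfl, one_smul]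
    norm_num
  have etopb : Tfun iv b (psiOf (List.replicate m τ)) (m + 1) (Finset.Icc (m + 1 + 1) (m + 1))
      = 1 := by
    rw [show Finset.Icc (m + 1 + 1) (m + 1) = (∅ : Finset ℕ) by
      apply Finset.Icc_eq_empty; omega, Tfun_empty]
  have emid : ∀ i ∈ Finset.range m,
      S (Tfun iv a (psiOf (List.replicate m τ)) (m + 1) (Finset.Icc 1 (i + 1)))
        * Tfun iv b (psiOf (List.replicate m τ)) (m + 1) (Finset.Icc (i + 1 + 1) (m + 1))
      = a τ • (S (pt iv (List.replicate i τ)) * pt iv (List.replicate (m - 1 - i) τ)) := by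
    intro i hi
    have him := Finset.mem_range.mp hi
    rw [Tfun_Icc iv τ a _ _ hψ 1 (i + 1) le_rfl (by omega) (by omega), if_neg (by omega),
      Tfun_Icc iv τ b _ _ hψ (i + 1 + 1) (m + 1) (by omega) (by omega) le_rfl,
      if_pos rfl, one_smul, map_smul, smul_mul_assoc]
    have h1 : i + 1 - 1 = i := by omega
    have h2 : m + 1 - (i + 1 + 1) = m - 1 - i := by omega
    rw [h1, h2]
  rw [e0, e0b, etopa, etopb, Finset.sum_congr rfl emid, ← Finset.smul_sum,
    S_one iv a b Δ hΔ S hS, one_mul, mul_one] at h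
  have h2 := eq_neg_of_add_eq_zero_right h
  rw [h2]
  abel

end Aux5
end PaperCHA

open PaperCHA in
/-- **Corollary 5.7 (antipode on generators):** let `S` be the antipode of `H_{(ι,a,b)}`.
(i) If `a(τ) = b(τ) = 0`, then `S(τ^{⊗(n-1)}) = −τ^{⊗(n-1)}` for all `n ≥ 1`.
(ii) If `a(τ) = 1` and `b(τ) = 0`, then `S(τ^{⊗(n-1)}) = −(τ−ι)^{⊗(n-1)}` for all
`n ≥ 1`. -/
theorem antipode_on_generators
    {V : Type} [AddCommGroup V] [Module ℂ V] (iv : V) (a b : V →ₗ[ℂ] ℂ)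
    (ha : a iv = 1) (hb : b iv = 1)
    (Δ : HAlg V iv →ₗ[ℂ] HAlg V iv ⊗[ℂ] HAlg V iv) (hΔ : DeltaSpec iv a b Δ)
    (S : HAlg V iv →ₗ[ℂ] HAlg V iv)
    (hS : ∀ x : HAlg V iv,
      LinearMap.mul' ℂ (HAlg V iv) (TensorProduct.map S LinearMap.id (Δ x))
        = algebraMap ℂ (HAlg V iv) (eps iv x))
    (hS' : ∀ x : HAlg V iv,
      LinearMap.mul' ℂ (HAlg V iv) (TensorProduct.map LinearMap.id S (Δ x))
        = algebraMap ℂ (HAlg V iv) (eps iv x)) :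
    (∀ τ : V, a τ = 0 → b τ = 0 → ∀ n : ℕ, 1 ≤ n →
        S (pt iv (List.replicate (n - 1) τ)) = -pt iv (List.replicate (n - 1) τ)) ∧
    (∀ τ : V, a τ = 1 → b τ = 0 → ∀ n : ℕ, 1 ≤ n →
        S (pt iv (List.replicate (n - 1) τ)) = -pt iv (List.replicate (n - 1) (τ - iv))) := by
  refine ⟨?_, ?_⟩
  · intro τ haτ hbτ n hn
    obtain ⟨m, rfl⟩ : ∃ m, n = m + 1 := ⟨n - 1, by omega⟩
    simp only [Nat.add_sub_cancel]
    rw [key_eq iv τ a b hbτ Δ hΔ S hS m, haτ, zero_smul, sub_zero]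
  · intro τ haτ hbτ
    have main : ∀ m, S (pt iv (List.replicate m τ))
        = - pt iv (List.replicate m (τ - iv)) := by
      intro m
      induction m using Nat.strong_induction_on with
      | _ m ih =>
        rw [key_eq iv τ a b hbτ Δ hΔ S hS m, haτ, one_smul]
        have hsum : ∑ i ∈ Finset.range m,
            S (pt iv (List.replicate i τ)) * pt iv (List.replicate (m - 1 - i) τ)
            = -∑ i ∈ Finset.range m,
                pt iv (List.replicate i (τ - iv)) * pt iv (List.replicate (m - 1 - i) τ) := by
          rw [← Finset.sum_neg_distrib]
          refine Finset.sum_congr rfl fun i hi => ?_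
          rw [ih i (Finset.mem_range.mp hi), neg_mul]
        rw [hsum, sub_neg_eq_add, telescope iv τ m]
        abel
    intro n hn
    obtain ⟨m, rfl⟩ : ∃ m, n = m + 1 := ⟨n - 1, by omega⟩
    simp only [Nat.add_sub_cancel]
    exact main m
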